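/- With W₁ = ∑_{(q,k)} (1/z_{q,k} − log(1 + 1/z_{q,k})) where z_{q,k} = q + ⋯ + q^k, and W₂ = M + ∑_{(q,k), k≥2} 1/z_{q,k} where M is the Meissel–Mertens constant, one has −W₁ + W₂ = γ (the Euler–Mascheroni constant). -/

import Mathlib

/-- The real value `q + q^2 + ⋯ + q^k` attached to a pair `(q, k)`. -/
noncomputable def zval (x : ℕ × ℕ) : ℝ := ∑ t ∈ Finset.Icc 1 x.2, (x.1 : ℝ) ^ t

namespace W1W2

lemma zval_succ (p k : ℕ) : zval (p, k + 1) = zval (p, k) + (p : ℝ) ^ (k + 1) := by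
  simp [zval, Finset.sum_Icc_succ_top (Nat.le_add_left 1 k)]

lemma key (p k : ℕ) : ((p : ℝ) - 1) * zval (p, k) = (p : ℝ) ^ (k + 1) - p := by
  induction k with
  | zero => simp [zval]
  | succ n ih => rw [zval_succ, mul_add, ih]; ring

lemma pow_le_zval {p : ℕ} (hP : 1 ≤ (p : ℝ)) {k : ℕ} (hk : 1 ≤ k) :
    (p : ℝ) ^ k ≤ zval (p, k) := by
  have hm : k ∈ Finset.Icc 1 k := by simp [hk]
  exact Finset.single_le_sum (fun t _ => pow_nonneg (by linarith) t) hm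

lemma zval_pos {p : ℕ} (hP : 1 ≤ (p : ℝ)) {k : ℕ} (hk : 1 ≤ k) : 0 < zval (p, k) :=
  lt_of_lt_of_le (pow_pos (by linarith) k) (pow_le_zval hP hk)

lemma one_div_zval_le {p : ℕ} (hP : 1 ≤ (p : ℝ)) {k : ℕ} (hk : 1 ≤ k) :
    1 / zval (p, k) ≤ ((p : ℝ)⁻¹) ^ k := by
  rw [inv_pow, ← one_div]
  exact one_div_le_one_div_of_le (pow_pos (by linarith) k) (pow_le_zval hP hk)

lemma log_eq {p : ℕ} (hP : 2 ≤ (p : ℝ)) {k : ℕ} (hk : 1 ≤ k) :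
    Real.log (1 + 1 / zval (p, k)) =
      Real.log (1 - ((p : ℝ)⁻¹) ^ (k + 1)) - Real.log (1 - ((p : ℝ)⁻¹) ^ k) := by
  have hP0 : (0 : ℝ) < p := by linarith
  have hz := zval_pos (by linarith) hk
  have hinv : (p : ℝ)⁻¹ < 1 := inv_lt_one_of_one_lt₀ (by linarith)
  have hinv0 : (0 : ℝ) ≤ (p : ℝ)⁻¹ := inv_nonneg.mpr hP0.le
  have hden : (0 : ℝ) < 1 - ((p : ℝ)⁻¹) ^ k := by
    have := pow_lt_one₀ hinv0 hinv (by omega : k ≠ 0)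
    linarith
  have hnum : (0 : ℝ) < 1 - ((p : ℝ)⁻¹) ^ (k + 1) := by
    have := pow_lt_one₀ hinv0 hinv (by omega : k + 1 ≠ 0)
    linarith
  have h1 : 1 + 1 / zval (p, k) = (1 - ((p : ℝ)⁻¹) ^ (k + 1)) / (1 - ((p : ℝ)⁻¹) ^ k) := by
    rw [eq_div_iff hden.ne']
    have hkey := key p k
    have hpk : (p : ℝ) ^ k ≠ 0 := pow_ne_zero _ hP0.ne'
    rw [inv_pow, inv_pow]
    field_simp
    linear_combination (-((p:ℝ) ^ k)) * hkey
  rw [h1, Real.log_div hnum.ne' hden.ne']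


lemma log_nonneg' {p : ℕ} (hP : 1 ≤ (p : ℝ)) {k : ℕ} (hk : 1 ≤ k) :
    0 ≤ Real.log (1 + 1 / zval (p, k)) := by
  apply Real.log_nonneg
  have := zval_pos hP hk
  have : 0 ≤ 1 / zval (p, k) := by positivity
  linarith

lemma log_le {p : ℕ} (hP : 1 ≤ (p : ℝ)) {k : ℕ} (hk : 1 ≤ k) :
    Real.log (1 + 1 / zval (p, k)) ≤ 1 / zval (p, k) := by
  have hz := zval_pos hP hk
  have h : (0:ℝ) < 1 + 1 / zval (p, k) := by positivity
  have := Real.log_le_sub_one_of_pos h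
  linarith

lemma summable_geom_shift {p : ℕ} (hP : 2 ≤ (p : ℝ)) (s : ℕ) :
    Summable (fun k : ℕ => ((p : ℝ)⁻¹) ^ (k + s)) := by
  have h0 : (0:ℝ) ≤ (p : ℝ)⁻¹ := by positivity
  have h1 : (p : ℝ)⁻¹ < 1 := inv_lt_one_of_one_lt₀ (by linarith)
  have := summable_geometric_of_lt_one h0 h1
  simpa [pow_add] using this.mul_right (((p:ℝ)⁻¹) ^ s)

lemma summable_log {p : ℕ} (hP : 2 ≤ (p : ℝ)) (s : ℕ) (hs : 1 ≤ s) :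
    Summable (fun k : ℕ => Real.log (1 + 1 / zval (p, k + s))) := by
  refine Summable.of_nonneg_of_le (fun k => log_nonneg' (by linarith) (by omega))
    (fun k => ?_) (summable_geom_shift hP s)
  exact (log_le (by linarith) (by omega)).trans (one_div_zval_le (by linarith) (by omega))

lemma summable_inv {p : ℕ} (hP : 2 ≤ (p : ℝ)) (s : ℕ) (hs : 1 ≤ s) :
    Summable (fun k : ℕ => 1 / zval (p, k + s)) := by
  refine Summable.of_nonneg_of_le (fun k => ?_) (fun k => one_div_zval_le (by linarith) (by omega))
    (summable_geom_shift hP s)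
  have := zval_pos (show (1:ℝ) ≤ p by linarith) (show 1 ≤ k + s by omega)
  positivity

lemma hasSum_log {p : ℕ} (hP : 2 ≤ (p : ℝ)) :
    HasSum (fun k : ℕ => Real.log (1 + 1 / zval (p, k + 2)))
      (-Real.log (1 - ((p : ℝ)⁻¹) ^ 2)) := by
  have hsum := summable_log hP 2 (by norm_num)
  rw [hsum.hasSum_iff_tendsto_nat]
  have hform : ∀ n : ℕ, ∑ k ∈ Finset.range n, Real.log (1 + 1 / zval (p, k + 2)) =
      Real.log (1 - ((p : ℝ)⁻¹) ^ (n + 2)) - Real.log (1 - ((p : ℝ)⁻¹) ^ 2) := by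
    intro n
    have : ∀ k ∈ Finset.range n, Real.log (1 + 1 / zval (p, k + 2)) =
        (fun i => Real.log (1 - ((p : ℝ)⁻¹) ^ (i + 2))) (k + 1) -
        (fun i => Real.log (1 - ((p : ℝ)⁻¹) ^ (i + 2))) k := by
      intro k _
      have := log_eq hP (show 1 ≤ k + 2 by omega)
      simpa [show k + 2 + 1 = k + 1 + 2 by omega] using this
    rw [Finset.sum_congr rfl this]
    simpa using Finset.sum_range_sub (fun i => Real.log (1 - ((p : ℝ)⁻¹) ^ (i + 2))) n
  simp only [hform]
  have h1 : Filter.Tendsto (fun n : ℕ => Real.log (1 - ((p : ℝ)⁻¹) ^ (n + 2)))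
      Filter.atTop (nhds 0) := by
    have h0 : (0:ℝ) ≤ (p : ℝ)⁻¹ := by positivity
    have hlt : (p : ℝ)⁻¹ < 1 := inv_lt_one_of_one_lt₀ (by linarith)
    have hpow : Filter.Tendsto (fun n : ℕ => ((p : ℝ)⁻¹) ^ (n + 2)) Filter.atTop (nhds 0) :=
      (tendsto_pow_atTop_nhds_zero_of_lt_one h0 hlt).comp (Filter.tendsto_add_atTop_nat 2)
    have hcont : Filter.Tendsto (fun x : ℝ => Real.log (1 - x)) (nhds 0) (nhds 0) := by
      have : Filter.Tendsto (fun x : ℝ => (1:ℝ) - x) (nhds 0) (nhds 1) := by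
        simpa [Pi.sub_def] using ((continuous_const.sub continuous_id : Continuous fun x : ℝ => 1 - x)).tendsto 0
      simpa [Function.comp_def] using (Real.continuousAt_log (by norm_num : (1:ℝ) ≠ 0)).tendsto.comp this
    exact hcont.comp hpow
  simpa using h1.sub tendsto_const_nhds

lemma zval_one (p : ℕ) : zval (p, 1) = p := by simp [zval]

lemma per_prime {p : ℕ} (hP : 2 ≤ (p : ℝ)) :
    (∑' k : ℕ, (1 / zval (p, k + 1) - Real.log (1 + 1 / zval (p, k + 1)))) =
      (∑' k : ℕ, 1 / zval (p, k + 2)) + (Real.log (1 - 1 / (p : ℝ)) + 1 / (p : ℝ)) := by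
  have hP0 : (0:ℝ) < p := by linarith
  have hsum1 : Summable (fun k : ℕ => 1 / zval (p, k + 1) -
      Real.log (1 + 1 / zval (p, k + 1))) :=
    (summable_inv hP 1 le_rfl).sub (summable_log hP 1 le_rfl)
  rw [Summable.tsum_eq_zero_add hsum1]
  have hshift : (∑' k : ℕ, (1 / zval (p, k + 1 + 1) - Real.log (1 + 1 / zval (p, k + 1 + 1)))) =
      (∑' k : ℕ, 1 / zval (p, k + 2)) - (∑' k : ℕ, Real.log (1 + 1 / zval (p, k + 2))) := by
    have := Summable.tsum_sub (summable_inv hP 2 (by norm_num)) (summable_log hP 2 (by norm_num))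
    simpa [show ∀ k : ℕ, k + 1 + 1 = k + 2 from fun k => rfl] using this
  rw [show (0:ℕ) + 1 = 1 from rfl, hshift, (hasSum_log hP).tsum_eq, zval_one]
  have hmul : Real.log (1 - ((p : ℝ)⁻¹) ^ 2) =
      Real.log (1 + 1 / (p : ℝ)) + Real.log (1 - 1 / (p : ℝ)) := by
    rw [← Real.log_mul (by nlinarith [one_div_pos.mpr hP0]) (by
      have : 1 / (p:ℝ) ≤ 1/2 := by
        apply one_div_le_one_div_of_le <;> linarith
      linarith)]
    congr 1
    field_simp
    ring
  rw [hmul]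
  ring


lemma sub_log_nonneg {x : ℝ} (hx : 0 ≤ x) : 0 ≤ x - Real.log (1 + x) := by
  have := Real.log_le_sub_one_of_pos (show (0:ℝ) < 1 + x by linarith)
  linarith

lemma sub_log_le_sq {x : ℝ} (hx : 0 ≤ x) : x - Real.log (1 + x) ≤ x ^ 2 := by
  have h1 : (0:ℝ) < 1 + x := by linarith
  have h2 := Real.one_sub_inv_le_log_of_pos h1
  have hy : x ^ 2 - (x - 1 + (1 + x)⁻¹) = x ^ 3 * (1 + x)⁻¹ := by
    field_simp
    ring
  linarith [mul_nonneg (pow_nonneg hx 3) (inv_nonneg.mpr h1.le)]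

lemma summable_bound :
    Summable (fun y : {p : ℕ // p.Prime} × ℕ => ((y.1 : ℝ))⁻¹ ^ 2 * (2⁻¹ : ℝ) ^ y.2) := by
  have hf : Summable (fun p : {p : ℕ // p.Prime} => ((p : ℝ))⁻¹ ^ 2) := by
    have h : Summable (fun n : ℕ => ((n : ℝ))⁻¹ ^ 2) := by
      simpa [one_div, inv_pow] using summable_one_div_nat_pow.mpr one_lt_two
    exact h.comp_injective Subtype.val_injective
  have hg : Summable (fun k : ℕ => (2⁻¹ : ℝ) ^ k) :=
    summable_geometric_of_lt_one (by norm_num) (by norm_num)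
  exact hf.mul_of_nonneg hg (fun p => by positivity) (fun k => by positivity)

lemma two_le_cast {p : ℕ} (hp : p.Prime) : (2 : ℝ) ≤ (p : ℝ) := by
  exact_mod_cast hp.two_le

lemma bound_aux {p : ℕ} (hp : p.Prime) {k s : ℕ} (hs : 1 ≤ s) :
    (((p : ℝ)⁻¹) ^ (k + s)) ^ 2 ≤ ((p : ℝ))⁻¹ ^ 2 * (2⁻¹ : ℝ) ^ k := by
  have hP := two_le_cast hp
  have h0 : (0:ℝ) ≤ (p : ℝ)⁻¹ := by positivity
  have h2 : (p : ℝ)⁻¹ ≤ 2⁻¹ := by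
    rw [inv_le_inv₀ (by linarith) (by norm_num)]
    exact hP
  calc (((p : ℝ)⁻¹) ^ (k + s)) ^ 2 ≤ (((p : ℝ)⁻¹) ^ (k + 1)) ^ 2 := by
        apply pow_le_pow_left₀ (by positivity)
        exact pow_le_pow_of_le_one h0 (by
          rw [inv_le_one₀] <;> linarith) (by omega)
    _ = ((p : ℝ))⁻¹ ^ 2 * (((p : ℝ)⁻¹) ^ 2) ^ k := by ring
    _ ≤ ((p : ℝ))⁻¹ ^ 2 * (2⁻¹ : ℝ) ^ k := by
        apply mul_le_mul_of_nonneg_left _ (by positivity)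
        apply pow_le_pow_left₀ (by positivity)
        nlinarith

lemma summable_F1 :
    Summable (fun y : {p : ℕ // p.Prime} × ℕ =>
      1 / zval (y.1, y.2 + 1) - Real.log (1 + 1 / zval (y.1, y.2 + 1))) := by
  refine Summable.of_nonneg_of_le (fun y => ?_) (fun y => ?_) summable_bound
  · have hP := two_le_cast y.1.2
    have hz := zval_pos (show (1:ℝ) ≤ (y.1 : ℕ) by linarith) (show 1 ≤ y.2 + 1 by omega)
    exact sub_log_nonneg (by positivity)
  · have hP := two_le_cast y.1.2
    have hz := zval_pos (show (1:ℝ) ≤ (y.1 : ℕ) by linarith) (show 1 ≤ y.2 + 1 by omega)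
    calc 1 / zval (y.1, y.2 + 1) - Real.log (1 + 1 / zval (y.1, y.2 + 1))
        ≤ (1 / zval (y.1, y.2 + 1)) ^ 2 := sub_log_le_sq (by positivity)
      _ ≤ ((((y.1 : ℕ) : ℝ)⁻¹) ^ (y.2 + 1)) ^ 2 := by
          apply pow_le_pow_left₀ (by positivity)
          exact one_div_zval_le (by linarith) (by omega)
      _ ≤ _ := bound_aux y.1.2 le_rfl

lemma summable_F2 :
    Summable (fun y : {p : ℕ // p.Prime} × ℕ => 1 / zval (y.1, y.2 + 2)) := by
  refine Summable.of_nonneg_of_le (fun y => ?_) (fun y => ?_) summable_bound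
  · have hP := two_le_cast y.1.2
    have hz := zval_pos (show (1:ℝ) ≤ (y.1 : ℕ) by linarith) (show 1 ≤ y.2 + 2 by omega)
    positivity
  · have hP := two_le_cast y.1.2
    have hz := zval_pos (show (1:ℝ) ≤ (y.1 : ℕ) by linarith) (show 1 ≤ y.2 + 2 by omega)
    calc 1 / zval (y.1, y.2 + 2) ≤ (((y.1 : ℕ) : ℝ)⁻¹) ^ (y.2 + 2) :=
          one_div_zval_le (by linarith) (by omega)
      _ = (((y.1 : ℕ) : ℝ))⁻¹ ^ 2 * (((y.1 : ℕ) : ℝ)⁻¹) ^ y.2 := by ring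
      _ ≤ _ := by
          apply mul_le_mul_of_nonneg_left _ (by positivity)
          apply pow_le_pow_left₀ (by positivity)
          rw [inv_le_inv₀ (by linarith) (by norm_num)]
          exact hP

/-- Equivalence between the pairs with `c ≤ k` and `primes × ℕ`. -/
def eSub (c : ℕ) : {x : ℕ × ℕ // x.1.Prime ∧ c ≤ x.2} ≃ {p : ℕ // p.Prime} × ℕ where
  toFun x := (⟨x.1.1, x.2.1⟩, x.1.2 - c)
  invFun y := ⟨(y.1.1, y.2 + c), ⟨y.1.2, Nat.le_add_left c y.2⟩⟩
  left_inv x := by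
    obtain ⟨⟨a, b⟩, h1, h2⟩ := x
    apply Subtype.ext
    show (a, b - c + c) = (a, b)
    rw [Nat.sub_add_cancel h2]
  right_inv y := by
    obtain ⟨⟨a, ha⟩, k⟩ := y
    simp

lemma tsum_sub_eq (c : ℕ) (h : ℝ → ℝ) :
    (∑' x : {x : ℕ × ℕ // x.1.Prime ∧ c ≤ x.2}, h (zval x.1)) =
      ∑' y : {p : ℕ // p.Prime} × ℕ, h (zval (y.1, y.2 + c)) := by
  exact ((eSub c).symm.tsum_eq (fun x => h (zval x.1))).symm

end W1W2

theorem neg_W1_add_W2_eq_gamma :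
    -(∑' x : {x : ℕ × ℕ // x.1.Prime ∧ 1 ≤ x.2},
        (1 / zval x.1 - Real.log (1 + 1 / zval x.1))) +
      ((Real.eulerMascheroniConstant +
          ∑' p : {p : ℕ // p.Prime}, (Real.log (1 - 1 / (p : ℝ)) + 1 / (p : ℝ))) +
        ∑' x : {x : ℕ × ℕ // x.1.Prime ∧ 2 ≤ x.2}, 1 / zval x.1) =
    Real.eulerMascheroniConstant := by
  have h1 : (∑' x : {x : ℕ × ℕ // x.1.Prime ∧ 1 ≤ x.2},
      (1 / zval x.1 - Real.log (1 + 1 / zval x.1))) =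
      ∑' p : {p : ℕ // p.Prime}, ∑' k : ℕ,
        (1 / zval (p, k + 1) - Real.log (1 + 1 / zval (p, k + 1))) := by
    rw [W1W2.tsum_sub_eq 1 (fun z => 1 / z - Real.log (1 + 1 / z))]
    exact Summable.tsum_prod' W1W2.summable_F1 (fun p =>
      ((W1W2.summable_inv (W1W2.two_le_cast p.2) 1 le_rfl).sub
        (W1W2.summable_log (W1W2.two_le_cast p.2) 1 le_rfl)))
  have h2 : (∑' x : {x : ℕ × ℕ // x.1.Prime ∧ 2 ≤ x.2}, 1 / zval x.1) =
      ∑' p : {p : ℕ // p.Prime}, ∑' k : ℕ, 1 / zval (p, k + 2) := by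
    rw [W1W2.tsum_sub_eq 2 (fun z => 1 / z)]
    exact Summable.tsum_prod' W1W2.summable_F2 (fun p =>
      W1W2.summable_inv (W1W2.two_le_cast p.2) 2 (by norm_num))
  have hG1 : Summable (fun p : {p : ℕ // p.Prime} => ∑' k : ℕ,
      (1 / zval (p, k + 1) - Real.log (1 + 1 / zval (p, k + 1)))) :=
    (W1W2.summable_F1.hasSum.prod_fiberwise (fun p =>
      ((W1W2.summable_inv (W1W2.two_le_cast p.2) 1 le_rfl).sub
        (W1W2.summable_log (W1W2.two_le_cast p.2) 1 le_rfl)).hasSum)).summable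
  have hG2 : Summable (fun p : {p : ℕ // p.Prime} => ∑' k : ℕ, 1 / zval (p, k + 2)) :=
    (W1W2.summable_F2.hasSum.prod_fiberwise (fun p =>
      (W1W2.summable_inv (W1W2.two_le_cast p.2) 2 (by norm_num)).hasSum)).summable
  have hmain : (∑' p : {p : ℕ // p.Prime}, ∑' k : ℕ,
        (1 / zval (p, k + 1) - Real.log (1 + 1 / zval (p, k + 1)))) -
      (∑' p : {p : ℕ // p.Prime}, ∑' k : ℕ, 1 / zval (p, k + 2)) =
      ∑' p : {p : ℕ // p.Prime}, (Real.log (1 - 1 / (p : ℝ)) + 1 / (p : ℝ)) := by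
    rw [← Summable.tsum_sub hG1 hG2]
    apply tsum_congr
    intro p
    have := W1W2.per_prime (W1W2.two_le_cast p.2)
    linarith
  rw [h1, h2]
  linarith [hmain]
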